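/- Fix k ≥ 2 and s, r, ρ > 0. There exists a constant C > 0 such that for every injective holomorphic map F : B_ρ → ℂ^k (defined and Differentiable over ℂ on the open ball B_ρ of radius ρ centered at 0) with F(0) = 0 and s‖z‖ ≤ ‖F(z)‖ ≤ r‖z‖ for all z ∈ B_ρ, the derivative A_F = dF(0) (the Fréchet derivative of F at 0) is an invertible linear map of ℂ^k, and ‖A_F⁻¹(F(z)) − z‖ ≤ C‖z‖² for all z ∈ B_ρ. -/

import Mathlib

open Metric Set Filter Topology

noncomputable section

/-- Quadratic Schwarz-type estimate for a one-variable holomorphic function vanishing to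
second order at the origin. -/
lemma slice_quad {E : Type*} [NormedAddCommGroup E] [NormedSpace ℂ E] [CompleteSpace E]
    (f : ℂ → E) (R T M : ℝ) (hT : 1 ≤ T) (hTR : T < R)
    (hf : DifferentiableOn ℂ f (Metric.ball 0 R))
    (h0 : f 0 = 0) (h0' : deriv f 0 = 0)
    (hb : ∀ t : ℂ, ‖t‖ = T → ‖f t‖ ≤ M) :
    ‖f 1‖ ≤ M / T ^ 2 := by
  have hT0 : (0 : ℝ) < T := lt_of_lt_of_le one_pos hT
  set g : ℂ → E := dslope (dslope f 0) 0 with hg_def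
  have hg : DifferentiableOn ℂ g (Metric.ball 0 R) := by
    have h1 : DifferentiableOn ℂ (dslope f 0) (Metric.ball 0 R) :=
      (Complex.differentiableOn_dslope (ball_mem_nhds _ (hT0.trans hTR))).mpr hf
    exact (Complex.differentiableOn_dslope (ball_mem_nhds _ (hT0.trans hTR))).mpr h1
  have key : ∀ t : ℂ, t ≠ 0 → g t = (t ^ 2)⁻¹ • f t := by
    intro t ht
    have h1 : dslope f 0 t = t⁻¹ • f t := by
      rw [dslope_of_ne _ ht, slope_def_module, h0, sub_zero, sub_zero]
    have h2 : dslope f 0 0 = 0 := by rw [dslope_same, h0']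
    rw [hg_def, dslope_of_ne _ ht, slope_def_module, h1, h2, sub_zero, sub_zero,
      smul_smul, ← mul_inv, sq]
  have hmem : Metric.closedBall (0 : ℂ) T ⊆ Metric.ball 0 R :=
    closedBall_subset_ball hTR
  have hd : DiffContOnCl ℂ g (Metric.ball 0 T) := by
    apply DifferentiableOn.diffContOnCl
    rw [closure_ball (0 : ℂ) hT0.ne']
    exact hg.mono hmem
  have hfront : ∀ t ∈ frontier (Metric.ball (0 : ℂ) T), ‖g t‖ ≤ M / T ^ 2 := by
    intro t ht
    rw [frontier_ball (0 : ℂ) hT0.ne'] at ht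
    have htn : ‖t‖ = T := by simpa using mem_sphere_iff_norm.mp ht
    have ht0 : t ≠ 0 := by
      intro h; rw [h, norm_zero] at htn; exact hT0.ne htn
    rw [key t ht0, norm_smul, norm_inv, norm_pow, htn]
    have hM0 : 0 ≤ M := le_trans (norm_nonneg _) (hb t htn)
    rw [inv_mul_le_iff₀ (by positivity)]
    have hMe : T ^ 2 * (M / T ^ 2) = M := by field_simp
    rw [hMe]
    exact hb t htn
  have h1mem : (1 : ℂ) ∈ closure (Metric.ball (0 : ℂ) T) := by
    rw [closure_ball (0 : ℂ) hT0.ne']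
    simpa using hT
  have := Complex.norm_le_of_forall_mem_frontier_norm_le isBounded_ball hd hfront h1mem
  have hg1 : g 1 = f 1 := by rw [key 1 one_ne_zero]; simp
  rwa [hg1] at this

set_option maxHeartbeats 1000000 in
theorem quadratic_estimate_for_bounded_family (k : ℕ) (hk : 2 ≤ k) (s r ρ : ℝ)
    (hs : 0 < s) (hr : 0 < r) (hρ : 0 < ρ) :
    ∃ C > (0 : ℝ), ∀ F : EuclideanSpace ℂ (Fin k) → EuclideanSpace ℂ (Fin k),
      DifferentiableOn ℂ F (Metric.ball 0 ρ) →
      Set.InjOn F (Metric.ball 0 ρ) →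
      F 0 = 0 →
      (∀ z ∈ Metric.ball (0 : EuclideanSpace ℂ (Fin k)) ρ,
        s * ‖z‖ ≤ ‖F z‖ ∧ ‖F z‖ ≤ r * ‖z‖) →
      ∃ A : EuclideanSpace ℂ (Fin k) ≃L[ℂ] EuclideanSpace ℂ (Fin k),
        (A : EuclideanSpace ℂ (Fin k) →L[ℂ] EuclideanSpace ℂ (Fin k)) = fderiv ℂ F 0 ∧
        ∀ z ∈ Metric.ball (0 : EuclideanSpace ℂ (Fin k)) ρ,
          ‖A.symm (F z) - z‖ ≤ C * ‖z‖ ^ 2 := by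
  classical
  set E := EuclideanSpace ℂ (Fin k)
  refine ⟨s⁻¹ * (8 * r / (3 * ρ)) + (r / s + 1) * (2 / ρ), by positivity, ?_⟩
  intro F hF hinj hF0 hbd
  have h0mem : (0 : E) ∈ Metric.ball (0 : E) ρ := mem_ball_self hρ
  have hFd : DifferentiableAt ℂ F 0 :=
    (hF.differentiableAt (isOpen_ball.mem_nhds h0mem))
  set L : E →L[ℂ] E := fderiv ℂ F 0 with hL_def
  have hL : HasFDerivAt F L 0 := hFd.hasFDerivAt
  -- derivative of the slice t ↦ F (t • z) at 0 is L z
  have hslice : ∀ z : E, HasDerivAt (fun t : ℂ => F (t • z)) (L z) 0 := by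
    intro z
    have hinner : HasDerivAt (fun t : ℂ => t • z) z 0 := by
      simpa using (hasDerivAt_id (0 : ℂ)).smul_const z
    have := HasFDerivAt.comp_hasDerivAt (0 : ℂ)
      (by simpa using hL : HasFDerivAt F L ((0 : ℂ) • z)) hinner
    exact this
  -- lower and upper bounds for ‖L z‖
  have hLbd : ∀ z : E, s * ‖z‖ ≤ ‖L z‖ ∧ ‖L z‖ ≤ r * ‖z‖ := by
    intro z
    have htend : Tendsto (fun t : ℝ => ‖slope (fun u : ℂ => F (u • z)) 0 (t : ℂ)‖)
        (𝓝[>] 0) (𝓝 ‖L z‖) := by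
      have h1 : Tendsto (slope (fun u : ℂ => F (u • z)) 0) (𝓝[≠] (0 : ℂ)) (𝓝 (L z)) :=
        hasDerivAt_iff_tendsto_slope.mp (hslice z)
      have h2 : Tendsto (fun t : ℝ => (t : ℂ)) (𝓝[>] (0 : ℝ)) (𝓝[≠] (0 : ℂ)) := by
        rw [tendsto_nhdsWithin_iff]
        constructor
        · exact (Complex.continuous_ofReal.tendsto 0).mono_left nhdsWithin_le_nhds
        · filter_upwards [self_mem_nhdsWithin] with t ht
          simp only [Set.mem_compl_iff, Set.mem_singleton_iff]
          exact_mod_cast ne_of_gt ht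
      exact ((h1.comp h2).norm)
    have hev : ∀ᶠ t : ℝ in 𝓝[>] 0,
        s * ‖z‖ ≤ ‖slope (fun u : ℂ => F (u • z)) 0 (t : ℂ)‖ ∧
        ‖slope (fun u : ℂ => F (u • z)) 0 (t : ℂ)‖ ≤ r * ‖z‖ := by
      have hsmall : ∀ᶠ t : ℝ in 𝓝[>] 0, t * ‖z‖ < ρ ∧ 0 < t := by
        have hA : ∀ᶠ t : ℝ in 𝓝[>] (0 : ℝ), t * ‖z‖ < ρ := by
          apply eventually_nhdsWithin_of_eventually_nhds
          have hc : Continuous fun t : ℝ => t * ‖z‖ := by continuity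
          have h := hc.tendsto 0
          rw [zero_mul] at h
          exact h.eventually_lt_const hρ
        have hB : ∀ᶠ t : ℝ in 𝓝[>] (0 : ℝ), 0 < t := by
          filter_upwards [self_mem_nhdsWithin] with t ht using ht
        exact hA.and hB
      filter_upwards [hsmall] with t ⟨h1, h2⟩
      have hmem : (t : ℂ) • z ∈ Metric.ball (0 : E) ρ := by
        rw [mem_ball_zero_iff, norm_smul]
        simpa [abs_of_pos h2] using h1
      have hb := hbd _ hmem
      have hcast : ‖(t : ℂ)‖ = t := by
        rw [Complex.norm_real, Real.norm_of_nonneg h2.le]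
      have hslope : ‖slope (fun u : ℂ => F (u • z)) 0 (t : ℂ)‖ = t⁻¹ * ‖F ((t : ℂ) • z)‖ := by
        rw [slope_def_module, sub_zero, zero_smul, hF0, sub_zero, norm_smul, norm_inv, hcast]
      have hnorm : ‖(t : ℂ) • z‖ = t * ‖z‖ := by rw [norm_smul, hcast]
      rw [hnorm] at hb
      constructor
      · rw [hslope, le_inv_mul_iff₀ h2]
        calc t * (s * ‖z‖) = s * (t * ‖z‖) := by ring
        _ ≤ ‖F ((t:ℂ) • z)‖ := hb.1
      · rw [hslope, inv_mul_le_iff₀ h2]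
        calc ‖F ((t:ℂ) • z)‖ ≤ r * (t * ‖z‖) := hb.2
        _ = t * (r * ‖z‖) := by ring
    constructor
    · exact ge_of_tendsto htend (hev.mono fun t h => h.1)
    · exact le_of_tendsto htend (hev.mono fun t h => h.2)
  -- L is bijective
  have hLinj : Function.Injective L := by
    intro a b hab
    have hz : L (a - b) = 0 := by rw [map_sub, hab, sub_self]
    have h1 := (hLbd (a - b)).1
    rw [hz, norm_zero] at h1
    have h2 : ‖a - b‖ = 0 :=
      le_antisymm (by nlinarith [norm_nonneg (a - b)]) (norm_nonneg _)
    exact sub_eq_zero.mp (norm_eq_zero.mp h2)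
  have hLsurj : Function.Surjective L :=
    LinearMap.injective_iff_surjective.mp hLinj
  set Aeq : E ≃ₗ[ℂ] E := LinearEquiv.ofBijective (L : E →ₗ[ℂ] E) ⟨hLinj, hLsurj⟩
  set A : E ≃L[ℂ] E := Aeq.toContinuousLinearEquiv with hA_def
  have hAapp : ∀ z : E, A z = L z := fun z => rfl
  have hAcoe : (A : E →L[ℂ] E) = L :=
    ContinuousLinearMap.ext fun z => hAapp z
  refine ⟨A, hAcoe, ?_⟩
  have hAsymm : ∀ w : E, ‖A.symm w‖ ≤ s⁻¹ * ‖w‖ := by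
    intro w
    have h1 := (hLbd (A.symm w)).1
    have h2 : L (A.symm w) = w := by
      rw [← hAapp]; exact A.apply_symm_apply w
    rw [h2] at h1
    calc ‖A.symm w‖ = s⁻¹ * (s * ‖A.symm w‖) := by field_simp
    _ ≤ s⁻¹ * ‖w‖ := mul_le_mul_of_nonneg_left h1 (by positivity)
  intro z hz
  rw [mem_ball_zero_iff] at hz
  rcases eq_or_ne z 0 with rfl | hz0
  · simp [hF0]
  have hznpos : 0 < ‖z‖ := norm_pos_iff.mpr hz0
  have hAsymmLz : A.symm (L z) = z := by
    rw [← hAapp]; exact A.symm_apply_apply z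
  by_cases hhalf : ‖z‖ < ρ / 2
  · -- quadratic estimate via slice_quad
    set T : ℝ := 3 * ρ / (4 * ‖z‖) with hT_def
    have hT1 : 1 ≤ T := by
      rw [hT_def, le_div_iff₀ (by positivity)]
      nlinarith
    have hTR : T < ρ / ‖z‖ := by
      rw [hT_def, div_lt_div_iff₀ (by positivity) hznpos]
      nlinarith
    set f : ℂ → E := fun t => F (t • z) - t • (L z) with hf_def
    have hfd : DifferentiableOn ℂ f (Metric.ball 0 (ρ / ‖z‖)) := by
      intro t ht
      rw [mem_ball_zero_iff] at ht
      have hmem : t • z ∈ Metric.ball (0 : E) ρ := by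
        rw [mem_ball_zero_iff, norm_smul]
        calc ‖t‖ * ‖z‖ < (ρ / ‖z‖) * ‖z‖ := by
              exact mul_lt_mul_of_pos_right ht hznpos
        _ = ρ := by field_simp
      apply DifferentiableAt.differentiableWithinAt
      apply DifferentiableAt.sub
      · exact (hF.differentiableAt (isOpen_ball.mem_nhds hmem)).comp t
          ((differentiableAt_id).smul_const z)
      · exact (differentiableAt_id).smul_const (L z)
    have hf0 : f 0 = 0 := by simp [hf_def, hF0]
    have hf0' : deriv f 0 = 0 := by
      have h1 : HasDerivAt f (L z - L z) 0 :=
        (hslice z).sub (by simpa using (hasDerivAt_id (0 : ℂ)).smul_const (L z))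
      rw [sub_self] at h1
      exact h1.deriv
    have hb : ∀ t : ℂ, ‖t‖ = T → ‖f t‖ ≤ 2 * r * T * ‖z‖ := by
      intro t htn
      have hmem : t • z ∈ Metric.ball (0 : E) ρ := by
        rw [mem_ball_zero_iff, norm_smul, htn, hT_def]
        rw [div_mul_eq_mul_div, mul_comm (4 : ℝ) ‖z‖, ← div_div,
          mul_div_assoc, div_self hznpos.ne', mul_one]
        linarith
      have h1 := (hbd _ hmem).2
      have h2 : ‖t • L z‖ ≤ T * (r * ‖z‖) := by
        rw [norm_smul, htn]
        exact mul_le_mul_of_nonneg_left (hLbd z).2 (le_trans zero_le_one hT1)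
      have h3 : ‖t • z‖ = T * ‖z‖ := by rw [norm_smul, htn]
      calc ‖f t‖ ≤ ‖F (t • z)‖ + ‖t • L z‖ := norm_sub_le _ _
      _ ≤ r * (T * ‖z‖) + T * (r * ‖z‖) := by rw [← h3]; exact add_le_add h1 h2
      _ = 2 * r * T * ‖z‖ := by ring
    have hq := slice_quad f (ρ / ‖z‖) T (2 * r * T * ‖z‖) hT1 hTR hfd hf0 hf0' hb
    have hf1 : f 1 = F z - L z := by simp [hf_def]
    rw [hf1] at hq
    have hTpos : 0 < T := lt_of_lt_of_le one_pos hT1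
    have hq2 : ‖F z - L z‖ ≤ 8 * r / (3 * ρ) * ‖z‖ ^ 2 := by
      calc ‖F z - L z‖ ≤ 2 * r * T * ‖z‖ / T ^ 2 := hq
      _ = 2 * r * ‖z‖ / T := by field_simp
      _ = 8 * r / (3 * ρ) * ‖z‖ ^ 2 := by
          rw [hT_def]; field_simp; ring
    have heq : A.symm (F z) - z = A.symm (F z - L z) := by
      rw [map_sub, hAsymmLz]
    rw [heq]
    calc ‖A.symm (F z - L z)‖ ≤ s⁻¹ * ‖F z - L z‖ := hAsymm _
    _ ≤ s⁻¹ * (8 * r / (3 * ρ) * ‖z‖ ^ 2) := by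
        exact mul_le_mul_of_nonneg_left hq2 (by positivity)
    _ ≤ (s⁻¹ * (8 * r / (3 * ρ)) + (r / s + 1) * (2 / ρ)) * ‖z‖ ^ 2 := by
        have : 0 ≤ (r / s + 1) * (2 / ρ) * ‖z‖ ^ 2 := by positivity
        nlinarith
  · -- trivial estimate for large z
    push_neg at hhalf
    have h1 := (hbd z (mem_ball_zero_iff.mpr hz)).2
    calc ‖A.symm (F z) - z‖ ≤ ‖A.symm (F z)‖ + ‖z‖ := norm_sub_le _ _
    _ ≤ s⁻¹ * ‖F z‖ + ‖z‖ := by exact add_le_add (hAsymm _) le_rfl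
    _ ≤ s⁻¹ * (r * ‖z‖) + ‖z‖ := by
        exact add_le_add (mul_le_mul_of_nonneg_left h1 (by positivity)) le_rfl
    _ = (r / s + 1) * ‖z‖ := by field_simp
    _ ≤ (r / s + 1) * ((2 / ρ) * ‖z‖ ^ 2) := by
        apply mul_le_mul_of_nonneg_left _ (by positivity)
        rw [sq]
        calc ‖z‖ = 1 * ‖z‖ := (one_mul _).symm
        _ ≤ (2 / ρ * ‖z‖) * ‖z‖ := by
            apply mul_le_mul_of_nonneg_right _ (norm_nonneg z)
            rw [div_mul_eq_mul_div, le_div_iff₀ hρ]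
            linarith
        _ = 2 / ρ * (‖z‖ * ‖z‖) := by ring
    _ ≤ (s⁻¹ * (8 * r / (3 * ρ)) + (r / s + 1) * (2 / ρ)) * ‖z‖ ^ 2 := by
        have : 0 ≤ s⁻¹ * (8 * r / (3 * ρ)) * ‖z‖ ^ 2 := by positivity
        nlinarith
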